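/- Let β > 0, ρ > 0, c > 0 with ρc² > 2, let σ(ε) = ε³ − ε, set γ = √((ρc² − 2)/(βc²)) and B = √(ρc²/2), and define p₊(x) = 1 + (ρc² − 2)/(1 + B cosh(γx)) and p₋(x) = 1 + (ρc² − 2)/(1 − B cosh(γx)) (the denominator of p₋ is strictly negative for all x since B > 1). Then the amplitudes satisfy sup_{x∈ℝ} |1 − p₊(x)| = c√(2ρ) − 2 and sup_{x∈ℝ} |1 − p₋(x)| = c√(2ρ) + 2; that is, the velocity–amplitude relation A(c) = c√(2ρ) ± 2 holds for the two families of pulses. -/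
import Mathlib


/-- the velocity–amplitude relation `A(c) = c√(2ρ) ± 2` for the two
explicit pulse solutions `p₊(x) = 1 + (ρc²−2)/(1 + B cosh(γx))` and
`p₋(x) = 1 + (ρc²−2)/(1 − B cosh(γx))` with `γ = √((ρc²−2)/(βc²))`, `B = √(ρc²/2)`:
`sup_x |1 − p₊(x)| = c√(2ρ) − 2` and `sup_x |1 − p₋(x)| = c√(2ρ) + 2`. -/
theorem stmt14 (β ρ c : ℝ) (hβ : 0 < β) (hρ : 0 < ρ) (hc : 0 < c)
    (hsup : ρ * c^2 > 2)
    (σ : ℝ → ℝ) (hσ : σ = fun ε => ε^3 - ε)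
    (γ B : ℝ) (hγ : γ = Real.sqrt ((ρ * c^2 - 2) / (β * c^2)))
    (hB : B = Real.sqrt (ρ * c^2 / 2))
    (pPlus pMinus : ℝ → ℝ)
    (hpPlus : pPlus = fun x => 1 + (ρ * c^2 - 2) / (1 + B * Real.cosh (γ * x)))
    (hpMinus : pMinus = fun x => 1 + (ρ * c^2 - 2) / (1 - B * Real.cosh (γ * x))) :
    (⨆ x : ℝ, |1 - pPlus x|) = c * Real.sqrt (2 * ρ) - 2 ∧
    (⨆ x : ℝ, |1 - pMinus x|) = c * Real.sqrt (2 * ρ) + 2 := by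
  have key : ∀ (g : ℝ → ℝ), (∀ x, g x ≤ g 0) → (⨆ x, g x) = g 0 := by
    intro g h
    refine le_antisymm (ciSup_le h) (le_ciSup ⟨g 0, ?_⟩ 0)
    rintro y ⟨x, rfl⟩; exact h x
  have hd0 : 0 < ρ * c^2 - 2 := by linarith
  have hB0 : 0 < B := by
    rw [hB]; exact Real.sqrt_pos.2 (by linarith)
  have hB2 : B^2 = ρ * c^2 / 2 := by
    rw [hB]; exact Real.sq_sqrt (by linarith)
  have hB1 : 1 < B := by nlinarith
  have hcosh : ∀ x : ℝ, 1 ≤ Real.cosh (γ * x) := fun x => Real.one_le_cosh _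
  have h4 : Real.sqrt 4 = 2 := by
    rw [show (4:ℝ) = 2^2 by norm_num, Real.sqrt_sq (by norm_num)]
  have h2B : c * Real.sqrt (2 * ρ) = 2 * B := by
    calc c * Real.sqrt (2*ρ) = Real.sqrt (c^2) * Real.sqrt (2*ρ) := by
          rw [Real.sqrt_sq hc.le]
      _ = Real.sqrt (c^2 * (2*ρ)) := (Real.sqrt_mul (by positivity) _).symm
      _ = Real.sqrt (4 * (ρ*c^2/2)) := by ring_nf
      _ = Real.sqrt 4 * Real.sqrt (ρ*c^2/2) := Real.sqrt_mul (by norm_num) _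
      _ = 2 * B := by rw [hB, h4]
  constructor
  · have habs : ∀ x, |1 - pPlus x| = (ρ * c^2 - 2) / (1 + B * Real.cosh (γ * x)) := by
      intro x
      have hden : 0 < 1 + B * Real.cosh (γ * x) := by nlinarith [hcosh x]
      rw [hpPlus]
      simp only
      rw [show 1 - (1 + (ρ * c^2 - 2) / (1 + B * Real.cosh (γ * x)))
          = -((ρ * c^2 - 2) / (1 + B * Real.cosh (γ * x))) by ring,
        abs_neg, abs_of_nonneg (by positivity)]
    have hmono : ∀ x, |1 - pPlus x| ≤ |1 - pPlus 0| := by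
      intro x
      rw [habs, habs, mul_zero, Real.cosh_zero, mul_one]
      gcongr <;> nlinarith [hcosh x]
    rw [key _ hmono, habs 0, mul_zero, Real.cosh_zero, mul_one, h2B,
      div_eq_iff (by linarith : (1:ℝ) + B ≠ 0)]
    nlinarith
  · have habs : ∀ x, |1 - pMinus x| = (ρ * c^2 - 2) / (B * Real.cosh (γ * x) - 1) := by
      intro x
      have hden : 0 < B * Real.cosh (γ * x) - 1 := by nlinarith [hcosh x]
      have hne : 1 - B * Real.cosh (γ * x) ≠ 0 := by linarith
      rw [hpMinus]
      simp only
      rw [show 1 - (1 + (ρ * c^2 - 2) / (1 - B * Real.cosh (γ * x)))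
          = (ρ * c^2 - 2) / (B * Real.cosh (γ * x) - 1) by
            field_simp
            ring,
        abs_of_nonneg (by positivity)]
    have hmono : ∀ x, |1 - pMinus x| ≤ |1 - pMinus 0| := by
      intro x
      rw [habs, habs, mul_zero, Real.cosh_zero, mul_one]
      gcongr <;> nlinarith [hcosh x]
    rw [key _ hmono, habs 0, mul_zero, Real.cosh_zero, mul_one, h2B,
      div_eq_iff (by linarith : B - 1 ≠ 0)]
    nlinarith
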